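/- Tightness of 2k−1 colors: Let S be the point set consisting of the k points {(i, 2i) : 0 ≤ i ≤ k−1} together with the k−1 points {(2k−i, 2i−1) : 1 ≤ i ≤ k−1}. Then every pair of points of S lies together in some bottomless rectangle containing at most k points of S. Consequently, any coloring of S in which every bottomless rectangle with at most k points is rainbow must use at least 2k−1 colors. -/
import Mathlib


/-- Membership in the bottomless rectangle `{(x,y) : a ≤ x ≤ b, y ≤ c}`. -/
def InBottomless (a b c : ℝ) (p : ℝ × ℝ) : Prop :=
  a ≤ p.1 ∧ p.1 ≤ b ∧ p.2 ≤ c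

noncomputable instance (a b c : ℝ) :
    DecidablePred (fun p : ℝ × ℝ => InBottomless a b c p) := by
  unfold InBottomless; infer_instance

/-- The witness point set: `{(i, 2i) : 0 ≤ i ≤ k-1} ∪ {(2k - i, 2i - 1) : 1 ≤ i ≤ k-1}`. -/
noncomputable def witnessSet (k : ℕ) : Finset (ℝ × ℝ) :=
  ((Finset.range k).image (fun i : ℕ => ((i : ℝ), 2 * (i : ℝ)))) ∪
  ((Finset.Icc 1 (k - 1)).image
    (fun i : ℕ => (2 * (k : ℝ) - (i : ℝ), 2 * (i : ℝ) - 1)))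

open Finset

lemma filter_image_card_le' {α β : Type*} [DecidableEq β] (s : Finset α) (f : α → β)
    (p : β → Prop) [DecidablePred p] :
    ((s.image f).filter p).card ≤ (s.filter (fun a => p (f a))).card := by
  rw [Finset.filter_image]
  exact Finset.card_image_le

lemma card_filter_le_Icc' (s : Finset ℕ) (p : ℕ → Prop) [DecidablePred p] (lo hi : ℕ)
    (h : ∀ i ∈ s, p i → lo ≤ i ∧ i ≤ hi) :
    (s.filter p).card ≤ hi + 1 - lo := by
  have hsub : s.filter p ⊆ Finset.Icc lo hi := by
    intro i hi'
    simp only [mem_filter] at hi'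
    exact Finset.mem_Icc.mpr (h i hi'.1 hi'.2)
  calc (s.filter p).card ≤ (Finset.Icc lo hi).card := Finset.card_le_card hsub
    _ = hi + 1 - lo := Nat.card_Icc lo hi

lemma cardW_le (k : ℕ) (a b c : ℝ) (lo1 hi1 lo2 hi2 : ℕ)
    (hA : ∀ i : ℕ, i < k → a ≤ (i:ℝ) → (i:ℝ) ≤ b → 2*(i:ℝ) ≤ c → lo1 ≤ i ∧ i ≤ hi1)
    (hB : ∀ i : ℕ, 1 ≤ i → i ≤ k-1 → a ≤ 2*(k:ℝ)-(i:ℝ) → 2*(k:ℝ)-(i:ℝ) ≤ b →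
      2*(i:ℝ)-1 ≤ c → lo2 ≤ i ∧ i ≤ hi2) :
    ((witnessSet k).filter (InBottomless a b c)).card ≤ (hi1+1-lo1) + (hi2+1-lo2) := by
  unfold witnessSet
  rw [Finset.filter_union]
  refine (Finset.card_union_le _ _).trans (Nat.add_le_add ?_ ?_)
  · refine (filter_image_card_le' _ _ _).trans (card_filter_le_Icc' _ _ _ _ ?_)
    intro i hi hp
    rw [Finset.mem_range] at hi
    exact hA i hi hp.1 hp.2.1 hp.2.2
  · refine (filter_image_card_le' _ _ _).trans (card_filter_le_Icc' _ _ _ _ ?_)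
    intro i hi hp
    rw [Finset.mem_Icc] at hi
    exact hB i hi.1 hi.2 hp.1 hp.2.1 hp.2.2

lemma mem_witness_iff (k : ℕ) (p : ℝ × ℝ) :
    p ∈ witnessSet k ↔ (∃ i : ℕ, i < k ∧ p = ((i:ℝ), 2*(i:ℝ))) ∨
      (∃ i : ℕ, 1 ≤ i ∧ i ≤ k - 1 ∧ p = (2*(k:ℝ)-(i:ℝ), 2*(i:ℝ)-1)) := by
  simp only [witnessSet, Finset.mem_union, Finset.mem_image, Finset.mem_range,
    Finset.mem_Icc]
  constructor
  · rintro (⟨i, hi, rfl⟩ | ⟨i, hi, rfl⟩)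
    · exact Or.inl ⟨i, hi, rfl⟩
    · exact Or.inr ⟨i, hi.1, hi.2, rfl⟩
  · rintro (⟨i, hi, rfl⟩ | ⟨i, hi1, hi2, rfl⟩)
    · exact Or.inl ⟨i, hi, rfl⟩
    · exact Or.inr ⟨i, ⟨hi1, hi2⟩, rfl⟩

lemma card_witness (k : ℕ) (hk : 1 ≤ k) : (witnessSet k).card = 2*k - 1 := by
  unfold witnessSet
  rw [Finset.card_union_of_disjoint, Finset.card_image_of_injOn,
    Finset.card_image_of_injOn, Finset.card_range, Nat.card_Icc]
  · omega
  · intro i _ j _ h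
    have h1 : 2*(k:ℝ) - (i:ℝ) = 2*(k:ℝ) - (j:ℝ) := congrArg Prod.fst h
    have : (i:ℝ) = j := by (try dsimp only); linarith
    exact_mod_cast this
  · intro i _ j _ h
    have : (i:ℝ) = j := congrArg Prod.fst h
    exact_mod_cast this
  · rw [Finset.disjoint_left]
    rintro p hp hq
    simp only [Finset.mem_image, Finset.mem_range, Finset.mem_Icc] at hp hq
    obtain ⟨i, hi, rfl⟩ := hp
    obtain ⟨j, ⟨hj1, hj2⟩, hj⟩ := hq
    have h1 : 2*(k:ℝ) - (j:ℝ) = (i:ℝ) := congrArg Prod.fst hj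
    have hik : (i:ℝ) + 1 ≤ k := by exact_mod_cast hi
    have hjk : (j:ℝ) + 1 ≤ k := by
      have : j + 1 ≤ k := by omega
      exact_mod_cast this
    linarith

lemma keyAA (k : ℕ) (i j : ℕ) (hi : i < k) (hj : j < k) (hij : i ≤ j) :
    ∃ a b c : ℝ, a ≤ b ∧ InBottomless a b c ((i:ℝ), 2*(i:ℝ)) ∧
      InBottomless a b c ((j:ℝ), 2*(j:ℝ)) ∧
      ((witnessSet k).filter (InBottomless a b c)).card ≤ k := by
  have hijR : (i:ℝ) ≤ j := Nat.cast_le.mpr hij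
  refine ⟨(i:ℝ), (j:ℝ), 2*(j:ℝ), hijR,
    ⟨le_refl _, hijR, by (try dsimp only); linarith⟩, ⟨hijR, le_refl _, le_refl _⟩, ?_⟩
  refine (cardW_le k _ _ _ i j 1 0 ?_ ?_).trans ?_
  · intro ℓ _ h1 h2 _
    exact ⟨by exact_mod_cast h1, by exact_mod_cast h2⟩
  · intro m _ hm2 _ h4 _
    exfalso
    have hjR : (j:ℝ)+1 ≤ k := by exact_mod_cast hj
    have hmR : (m:ℝ)+1 ≤ k := by exact_mod_cast (show m+1 ≤ k by omega)
    linarith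
  · omega

lemma keyBB (k : ℕ) (hk : 1 ≤ k) (i j : ℕ) (hi1 : 1 ≤ i) (hij : i ≤ j) (hj : j ≤ k-1) :
    ∃ a b c : ℝ, a ≤ b ∧ InBottomless a b c (2*(k:ℝ)-(i:ℝ), 2*(i:ℝ)-1) ∧
      InBottomless a b c (2*(k:ℝ)-(j:ℝ), 2*(j:ℝ)-1) ∧
      ((witnessSet k).filter (InBottomless a b c)).card ≤ k := by
  have hijR : (i:ℝ) ≤ j := Nat.cast_le.mpr hij
  refine ⟨2*(k:ℝ)-(j:ℝ), 2*(k:ℝ)-(i:ℝ), 2*(j:ℝ)-1, by (try dsimp only); linarith,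
    ⟨by (try dsimp only); linarith, le_refl _, by (try dsimp only); linarith⟩, ⟨le_refl _, by (try dsimp only); linarith, le_refl _⟩, ?_⟩
  refine (cardW_le k _ _ _ 1 0 i j ?_ ?_).trans ?_
  · intro ℓ hℓ h1 _ _
    exfalso
    have hℓR : (ℓ:ℝ)+1 ≤ k := by exact_mod_cast hℓ
    have hjR : (j:ℝ)+1 ≤ k := by exact_mod_cast (show j+1 ≤ k by omega)
    linarith
  · intro m _ _ h3 h4 _
    constructor
    · exact_mod_cast (show (i:ℝ) ≤ m by (try dsimp only); linarith)
    · exact_mod_cast (show (m:ℝ) ≤ j by (try dsimp only); linarith)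
  · omega

lemma keyAB (k : ℕ) (hk : 1 ≤ k) (i j : ℕ) (hi : i < k) (hj1 : 1 ≤ j) (hj2 : j ≤ k-1) :
    ∃ a b c : ℝ, a ≤ b ∧ InBottomless a b c ((i:ℝ), 2*(i:ℝ)) ∧
      InBottomless a b c (2*(k:ℝ)-(j:ℝ), 2*(j:ℝ)-1) ∧
      ((witnessSet k).filter (InBottomless a b c)).card ≤ k := by
  have hiR : (i:ℝ)+1 ≤ k := by exact_mod_cast hi
  have hjR : (j:ℝ)+1 ≤ k := by exact_mod_cast (show j+1 ≤ k by omega)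
  have hj1R : (1:ℝ) ≤ j := by exact_mod_cast hj1
  rcases le_or_gt j i with h | h
  · -- j ≤ i : take c = 2i
    have hjiR : (j:ℝ) ≤ i := Nat.cast_le.mpr h
    refine ⟨(i:ℝ), 2*(k:ℝ)-(j:ℝ), 2*(i:ℝ), by (try dsimp only); linarith,
      ⟨le_refl _, by (try dsimp only); linarith, le_refl _⟩, ⟨by (try dsimp only); linarith, le_refl _, by (try dsimp only); linarith⟩, ?_⟩
    refine (cardW_le k _ _ _ i i j i ?_ ?_).trans ?_
    · intro ℓ _ h1 _ h3
      exact ⟨by exact_mod_cast h1, by exact_mod_cast (show (ℓ:ℝ) ≤ i by (try dsimp only); linarith)⟩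
    · intro m _ _ _ h4 h5
      constructor
      · exact_mod_cast (show (j:ℝ) ≤ m by (try dsimp only); linarith)
      · have : 2*m ≤ 2*i+1 := by exact_mod_cast (show 2*(m:ℝ) ≤ 2*(i:ℝ)+1 by (try dsimp only); linarith)
        omega
    · omega
  · -- i < j : take c = 2j - 1
    have hijR : (i:ℝ)+1 ≤ j := by exact_mod_cast h
    refine ⟨(i:ℝ), 2*(k:ℝ)-(j:ℝ), 2*(j:ℝ)-1, by (try dsimp only); linarith,
      ⟨le_refl _, by (try dsimp only); linarith, by (try dsimp only); linarith⟩, ⟨by (try dsimp only); linarith, le_refl _, le_refl _⟩, ?_⟩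
    refine (cardW_le k _ _ _ i (j-1) j j ?_ ?_).trans ?_
    · intro ℓ _ h1 _ h3
      refine ⟨by exact_mod_cast h1, ?_⟩
      have : 2*ℓ+1 ≤ 2*j := by exact_mod_cast (show 2*(ℓ:ℝ)+1 ≤ 2*(j:ℝ) by (try dsimp only); linarith)
      omega
    · intro m _ _ _ h4 h5
      constructor
      · exact_mod_cast (show (j:ℝ) ≤ m by (try dsimp only); linarith)
      · exact_mod_cast (show (m:ℝ) ≤ j by (try dsimp only); linarith)
    · omega

lemma part1 (k : ℕ) (hk : 1 ≤ k) :
    ∀ p ∈ witnessSet k, ∀ q ∈ witnessSet k, ∃ a b c : ℝ, a ≤ b ∧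
      InBottomless a b c p ∧ InBottomless a b c q ∧
      ((witnessSet k).filter (InBottomless a b c)).card ≤ k := by
  intro p hp q hq
  rw [mem_witness_iff] at hp hq
  rcases hp with ⟨i, hi, rfl⟩ | ⟨i, hi1, hi2, rfl⟩ <;>
    rcases hq with ⟨j, hj, rfl⟩ | ⟨j, hj1, hj2, rfl⟩
  · rcases le_total i j with h | h
    · exact keyAA k i j hi hj h
    · obtain ⟨a, b, c, h1, h2, h3, h4⟩ := keyAA k j i hj hi h
      exact ⟨a, b, c, h1, h3, h2, h4⟩
  · exact keyAB k hk i j hi hj1 hj2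
  · obtain ⟨a, b, c, h1, h2, h3, h4⟩ := keyAB k hk j i hj hi1 hi2
    exact ⟨a, b, c, h1, h3, h2, h4⟩
  · rcases le_total i j with h | h
    · exact keyBB k hk i j hi1 h hj2
    · obtain ⟨a, b, c, h1, h2, h3, h4⟩ := keyBB k hk j i hj1 h hi2
      exact ⟨a, b, c, h1, h3, h2, h4⟩

/-- Tightness of `2k - 1` colors: every two points of the witness set lie in a
common bottomless rectangle containing at most `k` of its points; consequently
any coloring for which every bottomless rectangle with at most `k` points is
rainbow uses at least `2k - 1` colors. -/
theorem two_k_minus_one_colors_needed (k : ℕ) (hk : 1 ≤ k) :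
    (∀ p ∈ witnessSet k, ∀ q ∈ witnessSet k, ∃ a b c : ℝ, a ≤ b ∧
      InBottomless a b c p ∧ InBottomless a b c q ∧
      ((witnessSet k).filter (InBottomless a b c)).card ≤ k) ∧
    (∀ m : ℕ, ∀ χ : ℝ × ℝ → Fin m,
      (∀ a b c : ℝ, a ≤ b → ((witnessSet k).filter (InBottomless a b c)).card ≤ k →
        ∀ p ∈ (witnessSet k).filter (InBottomless a b c),
          ∀ q ∈ (witnessSet k).filter (InBottomless a b c), p ≠ q → χ p ≠ χ q) →
      2 * k - 1 ≤ m) := by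
  refine ⟨part1 k hk, ?_⟩
  intro m χ hχ
  have hinj : Set.InjOn χ (witnessSet k) := by
    intro p hp q hq he
    by_contra hpq
    obtain ⟨a, b, c, hab, hp', hq', hcard⟩ := part1 k hk p hp q hq
    exact hχ a b c hab hcard p (Finset.mem_filter.mpr ⟨hp, hp'⟩)
      q (Finset.mem_filter.mpr ⟨hq, hq'⟩) hpq he
  have := Finset.card_le_card_of_injOn χ (fun a _ => Finset.mem_univ (χ a)) hinj
  rw [card_witness k hk] at this
  simpa using this
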